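/- Let 1 ≤ p < ∞ and f ∈ L^p(G_m). If ‖σ_{M_n} f − f‖_{L^p(G_m)} = o(1/M_n) as n → ∞, then f is almost everywhere equal to a constant. -/

import Mathlib

open MeasureTheory Filter Finset Asymptotics ENNReal NNReal

noncomputable section

namespace VilenkinPaper

/-- The Vilenkin group `G_m = ∏_k ℤ_{m_k}`. -/
abbrev G (m : ℕ → ℕ) : Type := ∀ k, ZMod (m k)

/-- The generalized powers `M_0 = 1`, `M_{k+1} = m_k M_k`. -/
def M (m : ℕ → ℕ) : ℕ → ℕ
  | 0 => 1
  | k + 1 => m k * M m k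

/-- The basic neighborhoods `I_n = {y : y_0 = ⋯ = y_{n-1} = 0}`. -/
def I (m : ℕ → ℕ) (n : ℕ) : Set (G m) := {y | ∀ k < n, y k = 0}

/-- The generalized Rademacher functions `r_k(x) = exp(2πi x_k / m_k)`. -/
def rad (m : ℕ → ℕ) (k : ℕ) (x : G m) : ℂ :=
  Complex.exp (2 * Real.pi * Complex.I * ((x k).val : ℂ) / (m k : ℂ))

/-- The `j`-th digit of `n` in the base determined by `m`. -/
def digit (m : ℕ → ℕ) (n j : ℕ) : ℕ := (n / M m j) % m j

/-- The Vilenkin functions `ψ_n = ∏_k r_k^{n_k}`. -/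
def psi (m : ℕ → ℕ) (n : ℕ) (x : G m) : ℂ :=
  ∏ᶠ k, rad m k x ^ digit m n k

/-- Vilenkin-Fourier coefficient `f̂(k) = ∫ f ψ̄_k dμ`. -/
def fourierCoeff (m : ℕ → ℕ) (μ : Measure (G m)) (f : G m → ℂ) (k : ℕ) : ℂ :=
  ∫ x, f x * (starRingEnd ℂ) (psi m k x) ∂μ

/-- Partial sums `S_n f = ∑_{k=0}^{n-1} f̂(k) ψ_k`. -/
def S (m : ℕ → ℕ) (μ : Measure (G m)) (n : ℕ) (f : G m → ℂ) (x : G m) : ℂ :=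
  ∑ k ∈ Finset.range n, fourierCoeff m μ f k * psi m k x

/-- Fejér means `σ_n f = (1/n) ∑_{k=1}^n S_k f`. -/
def sigma (m : ℕ → ℕ) (μ : Measure (G m)) (n : ℕ) (f : G m → ℂ) (x : G m) : ℂ :=
  (n : ℂ)⁻¹ * ∑ k ∈ Finset.Icc 1 n, S m μ k f x

/-- Dirichlet kernels `D_n = ∑_{k=0}^{n-1} ψ_k`. -/
def D (m : ℕ → ℕ) (n : ℕ) (x : G m) : ℂ := ∑ k ∈ Finset.range n, psi m k x

/-- Fejér kernels `K_n = (1/n) ∑_{k=1}^n D_k`. -/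
def K (m : ℕ → ℕ) (n : ℕ) (x : G m) : ℂ := (n : ℂ)⁻¹ * ∑ k ∈ Finset.Icc 1 n, D m k x

/-- Convolution `(g ∗ f)(x) = ∫ f(t) g(x - t) dμ(t)`. -/
def conv (m : ℕ → ℕ) (μ : Measure (G m)) (g f : G m → ℂ) (x : G m) : ℂ :=
  ∫ t, f t * g (x - t) ∂μ

/-- `Q_n = ∑_{k=0}^{n-1} q_k`. -/
def Q (q : ℕ → ℝ) (n : ℕ) : ℝ := ∑ k ∈ Finset.range n, q k

/-- Nörlund means `t_n f = (1/Q_n) ∑_{k=1}^n q_{n-k} S_k f`. -/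
def T (m : ℕ → ℕ) (μ : Measure (G m)) (q : ℕ → ℝ) (n : ℕ) (f : G m → ℂ) (x : G m) : ℂ :=
  ((Q q n : ℝ) : ℂ)⁻¹ * ∑ k ∈ Finset.Icc 1 n, ((q (n - k) : ℝ) : ℂ) * S m μ k f x

/-- The modulus of continuity `ω_p(1/M_n, f) = sup_{t ∈ I_n} ‖f(·+t) - f‖_p`. -/
def omega (m : ℕ → ℕ) (μ : Measure (G m)) (p : ℝ≥0∞) (f : G m → ℂ) (n : ℕ) : ℝ :=
  ⨆ t ∈ I m n, (eLpNorm (fun x => f (x + t) - f x) p μ).toReal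


section Aux

instance (n : ℕ) : MeasurableAdd (ZMod n) :=
  ⟨fun _ => measurable_from_top, fun _ => measurable_from_top⟩

lemma chi_merge (mk : ℕ) (u v : ℕ) :
    Complex.exp ((2*Real.pi*u/mk : ℝ) * Complex.I) *
      (starRingEnd ℂ) (Complex.exp ((2*Real.pi*v/mk : ℝ) * Complex.I))
    = Complex.exp ((2*Real.pi*((u:ℝ)-v)/mk : ℝ) * Complex.I) := by
  rw [← Complex.exp_conj, map_mul, Complex.conj_ofReal, Complex.conj_I, ← Complex.exp_add]
  congr 1
  push_cast
  ring

lemma chi_eq_one_iff (mk : ℕ) (h2 : 2 ≤ mk) (u v : ℕ) (hu : u < mk) (hv : v < mk) :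
    Complex.exp ((2*Real.pi*((u:ℝ)-v)/mk : ℝ) * Complex.I) = 1 ↔ u = v := by
  constructor
  · intro h
    obtain ⟨n, hn⟩ := Complex.exp_eq_one_iff.mp h
    have hI : ((2*Real.pi*((u:ℝ)-v)/mk : ℝ) : ℂ) = ((n : ℝ) * (2*Real.pi) : ℝ) := by
      have : ((n:ℂ) * (2 * ↑Real.pi * Complex.I)) = (((n : ℝ) * (2*Real.pi) : ℝ) : ℂ) * Complex.I := by
        push_cast; ring
      rw [this] at hn
      exact mul_right_cancel₀ Complex.I_ne_zero hn
    have hR : (2*Real.pi*((u:ℝ)-v)/mk : ℝ) = (n : ℝ) * (2*Real.pi) := by exact_mod_cast hI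
    have hpi := Real.pi_pos
    have hmk : (0:ℝ) < mk := by positivity
    have hd : ((u:ℝ) - v) = n * mk := by
      field_simp at hR
      nlinarith [hR]
    have hdz : (u : ℤ) - v = n * mk := by exact_mod_cast hd
    have habs : |(n : ℤ) * mk| < mk := by
      rw [← hdz]
      rw [abs_lt]
      omega
    rw [abs_mul, Int.abs_natCast] at habs
    have hn0 : n = 0 := by
      by_contra hn0
      have h1 : (1:ℤ) ≤ |n| := Int.one_le_abs (by omega)
      nlinarith [habs]
    subst hn0
    simp at hdz
    omega
  · intro h
    subst h
    simp


lemma chi_pow (mk : ℕ) (h2 : 2 ≤ mk) (u v : ℕ) :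
    Complex.exp ((2*Real.pi*((u:ℝ)-v)/mk : ℝ) * Complex.I) ^ mk = 1 := by
  rw [← Complex.exp_nat_mul]
  have hmk : (mk : ℂ) ≠ 0 := by exact_mod_cast (by omega : mk ≠ 0)
  have : (mk : ℂ) * (((2*Real.pi*((u:ℝ)-v)/mk : ℝ) : ℂ) * Complex.I)
      = (((u:ℤ) - v : ℤ) : ℂ) * (2 * Real.pi * Complex.I) := by
    push_cast
    field_simp
  rw [this, Complex.exp_int_mul_two_pi_mul_I]

lemma geom_chi (mk : ℕ) (h2 : 2 ≤ mk) (u v : ℕ) (hu : u < mk) (hv : v < mk) :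
    ∑ q ∈ Finset.range mk,
      (Complex.exp ((2*Real.pi*u/mk : ℝ) * Complex.I) *
        (starRingEnd ℂ) (Complex.exp ((2*Real.pi*v/mk : ℝ) * Complex.I))) ^ q
    = if u = v then (mk : ℂ) else 0 := by
  rw [chi_merge]
  by_cases h : u = v
  · simp only [h, if_pos]
    have : Complex.exp ((2*Real.pi*((v:ℝ)-v)/mk : ℝ) * Complex.I) = 1 := by
      simp
    rw [this]
    simp
  · rw [if_neg h, geom_sum_eq (fun hc => h ((chi_eq_one_iff mk h2 u v hu hv).mp hc)),
      chi_pow mk h2 u v]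
    simp


variable {m : ℕ → ℕ} (hm : ∀ k, 2 ≤ m k)

section Mlemmas
include hm

lemma M_pos (n : ℕ) : 0 < M m n := by
  induction n with
  | zero => simp [M]
  | succ k ih => exact Nat.mul_pos (by have := hm k; omega) ih

lemma M_strictMono : StrictMono (M m) := by
  apply strictMono_nat_of_lt_succ
  intro n
  have h1 := M_pos hm n
  have h2 := hm n
  calc M m n < 2 * M m n := by omega
  _ ≤ m n * M m n := Nat.mul_le_mul_right _ h2
  _ = M m (n+1) := rfl

lemma M_dvd {k n : ℕ} (h : k ≤ n) : M m k ∣ M m n := by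
  induction n with
  | zero => simpa [Nat.le_zero.mp h]
  | succ j ih =>
    rcases Nat.lt_succ_iff_lt_or_eq.mp (Nat.lt_succ_of_le h) with h' | h'
    · exact (ih (Nat.lt_succ_iff.mp h')).trans ⟨m j, by simp [M, Nat.mul_comm]⟩
    · simp [h']

lemma M_mono {k n : ℕ} (h : k ≤ n) : M m k ≤ M m n :=
  (M_strictMono hm).le_iff_le.mpr h

lemma lt_M_self (n : ℕ) : n < M m (n + 1) :=
  lt_of_lt_of_le (Nat.lt_succ_self n) ((M_strictMono hm).le_apply (x := n + 1))

lemma digit_lt (n j : ℕ) : digit m n j < m j := Nat.mod_lt _ (by have := hm j; omega)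

lemma digit_eq_zero_of_lt {n k : ℕ} (h : n < M m k) : digit m n k = 0 := by
  simp [digit, Nat.div_eq_of_lt h]

lemma digit_eq_zero_of_lt' {n N k : ℕ} (h : n < M m N) (hk : N ≤ k) : digit m n k = 0 :=
  digit_eq_zero_of_lt hm (lt_of_lt_of_le h (M_mono hm hk))

lemma digit_add_mul {q r k n : ℕ} (hk : k < n) :
    digit m (q * M m n + r) k = digit m r k := by
  obtain ⟨d, hd⟩ : M m (k+1) ∣ M m n := M_dvd hm hk
  have hMk : 0 < M m k := M_pos hm k
  have : q * M m n + r = r + (q * d * m k) * M m k := by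
    rw [hd]; simp only [M]; ring
  rw [digit, this, Nat.add_mul_div_right _ _ hMk, Nat.add_mul_mod_self_right]
  rfl

lemma digit_top {q r n : ℕ} (hr : r < M m n) :
    digit m (q * M m n + r) n = q % m n := by
  rw [digit, Nat.add_comm, Nat.add_mul_div_right _ _ (M_pos hm n), Nat.div_eq_of_lt hr, Nat.zero_add]

lemma sum_digit_mul {N n : ℕ} (h : n < M m N) :
    ∑ k ∈ Finset.range N, digit m n k * M m k = n := by
  induction N generalizing n with
  | zero => simp [M] at h; simp [h]
  | succ N ih =>
    have hq : n / M m N < m N := by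
      rw [Nat.div_lt_iff_lt_mul (M_pos hm N)]; simpa [M, Nat.mul_comm] using h
    have hr : n % M m N < M m N := Nat.mod_lt _ (M_pos hm N)
    have hn : n = (n / M m N) * M m N + n % M m N := by
      have h0 := Nat.div_add_mod n (M m N)
      have h1 : n / M m N * M m N = M m N * (n / M m N) := Nat.mul_comm _ _
      omega
    rw [Finset.sum_range_succ]
    have h1 : ∀ k < N, digit m n k = digit m (n % M m N) k := by
      intro k hk
      conv_lhs => rw [hn]
      exact digit_add_mul hm hk
    have h2 : digit m n N = n / M m N := by
      conv_lhs => rw [hn]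
      rw [digit_top hm hr, Nat.mod_eq_of_lt hq]
    rw [Finset.sum_congr rfl (fun k hk => by rw [h1 k (Finset.mem_range.mp hk)]),
      ih hr, h2]
    omega

lemma exists_digit_ne {j k : ℕ} (h : j ≠ k) : ∃ i, digit m j i ≠ digit m k i := by
  by_contra hc
  push_neg at hc
  apply h
  set N := max j k + 1 with hN
  have hj : j < M m N := lt_of_lt_of_le (lt_of_le_of_lt (le_max_left j k) (lt_M_self hm _)) le_rfl
  have hk : k < M m N := lt_of_le_of_lt (le_max_right j k) (lt_M_self hm _)
  calc j = ∑ i ∈ Finset.range N, digit m j i * M m i := (sum_digit_mul hm hj).symm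
    _ = ∑ i ∈ Finset.range N, digit m k i * M m i := by
        exact Finset.sum_congr rfl (fun i _ => by rw [hc i])
    _ = k := sum_digit_mul hm hk

end Mlemmas

section PsiLemmas

lemma rad_eq (k : ℕ) (x : G m) :
    rad m k x = Complex.exp ((2*Real.pi*((x k).val : ℝ)/(m k) : ℝ) * Complex.I) := by
  unfold rad; congr 1; push_cast; ring

lemma norm_rad (k : ℕ) (x : G m) : ‖rad m k x‖ = 1 := by
  rw [rad_eq]; exact Complex.norm_exp_ofReal_mul_I _

include hm

lemma rad_add (k : ℕ) (x y : G m) : rad m k (x + y) = rad m k x * rad m k y := by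
  haveI : NeZero (m k) := ⟨by have := hm k; omega⟩
  set a := (x k).val with ha
  set b := (y k).val with hb
  set q := (a + b) / m k with hq
  set r := (a + b) % m k with hr
  have hv : ((x + y) k).val = r := ZMod.val_add (x k) (y k)
  rw [rad_eq, rad_eq, rad_eq, hv, ← Complex.exp_add]
  rw [Complex.exp_eq_exp_iff_exists_int]
  refine ⟨-(q : ℤ), ?_⟩
  have hmk : ((m k : ℝ)) ≠ 0 := by
    have := hm k; positivity
  have hab : ((r : ℕ) : ℝ) = (a : ℝ) + b - ((m k : ℝ)) * ((q : ℕ) : ℝ) := by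
    have h0 := Nat.div_add_mod (a + b) (m k)
    have h1 : ((m k : ℝ)) * ((q : ℕ) : ℝ) + ((r : ℕ) : ℝ) = (a : ℝ) + b := by
      exact_mod_cast h0
    linarith
  have key : (2*Real.pi*((r : ℕ) : ℝ)/(m k) : ℝ)
      = (2*Real.pi*(a : ℝ)/(m k) + 2*Real.pi*(b : ℝ)/(m k)) + (-((q : ℕ) : ℝ))*(2*Real.pi) := by
    field_simp
    linear_combination hab
  rw [key]
  push_cast
  ring

lemma psi_eq_prod {j N : ℕ} (hj : j < M m N) (x : G m) :
    psi m j x = ∏ k ∈ Finset.range N, rad m k x ^ digit m j k := by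
  apply finprod_eq_prod_of_mulSupport_subset
  intro k hk
  simp only [Function.mem_mulSupport] at hk
  by_contra hkN
  simp only [Finset.coe_range, Set.mem_Iio, not_lt] at hkN
  exact hk (by rw [digit_eq_zero_of_lt' hm hj hkN, pow_zero])

lemma psi_zero (x : G m) : psi m 0 x = 1 := by
  rw [psi_eq_prod hm (show 0 < M m 0 from M_pos hm 0)]
  simp

lemma norm_psi (j : ℕ) (x : G m) : ‖psi m j x‖ = 1 := by
  rw [psi_eq_prod hm (lt_M_self hm j), norm_prod]
  exact Finset.prod_eq_one fun k _ => by rw [norm_pow, norm_rad, one_pow]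

lemma psi_ne_zero (j : ℕ) (x : G m) : psi m j x ≠ 0 := by
  intro h
  have := norm_psi hm j x
  rw [h] at this
  simp at this

lemma psi_add (j : ℕ) (x y : G m) : psi m j (x + y) = psi m j x * psi m j y := by
  rw [psi_eq_prod hm (lt_M_self hm j), psi_eq_prod hm (lt_M_self hm j),
    psi_eq_prod hm (lt_M_self hm j), ← Finset.prod_mul_distrib]
  exact Finset.prod_congr rfl fun k _ => by rw [rad_add hm, mul_pow]

omit hm in
lemma measurable_rad (k : ℕ) : Measurable (rad m k) := by
  have : rad m k = (fun z : ZMod (m k) =>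
      Complex.exp (2 * Real.pi * Complex.I * (z.val : ℂ) / (m k : ℂ))) ∘ (fun x : G m => x k) := rfl
  rw [this]
  exact measurable_from_top.comp (measurable_pi_apply k)

lemma measurable_psi (j : ℕ) : Measurable (psi m j) := by
  have : psi m j = fun x => ∏ k ∈ Finset.range (j + 1), rad m k x ^ digit m j k :=
    funext fun x => psi_eq_prod hm (lt_M_self hm j) x
  rw [this]
  exact Finset.measurable_prod _ fun k _ => (measurable_rad k).pow_const _

lemma psi_single (i n : ℕ) :
    psi m n (Pi.single i (1 : ZMod (m i)))
      = Complex.exp ((2*Real.pi*(digit m n i : ℝ)/(m i) : ℝ) * Complex.I) := by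
  haveI : Fact (1 < m i) := ⟨by have := hm i; omega⟩
  have hnN : n < M m (max n i + 1) :=
    lt_of_lt_of_le (lt_M_self hm n) (M_mono hm (by omega))
  rw [psi_eq_prod hm hnN]
  rw [Finset.prod_eq_single i]
  · rw [rad_eq]
    rw [show (Pi.single i (1 : ZMod (m i)) : G m) i = 1 from Pi.single_eq_same i 1]
    rw [ZMod.val_one (m i), ← Complex.exp_nat_mul]
    congr 1
    push_cast
    ring
  · intro l _ hli
    haveI : NeZero (m l) := ⟨by have := hm l; omega⟩
    rw [rad_eq]
    rw [show (Pi.single i (1 : ZMod (m i)) : G m) l = 0 from Pi.single_eq_of_ne hli 1]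
    simp
  · intro hi
    exact absurd (Finset.mem_range.mpr (by omega)) hi

end PsiLemmas


section IntegralLemmas
variable (μ : Measure (G m)) [IsProbabilityMeasure μ] [μ.IsAddHaarMeasure]

omit hm in
lemma measurable_conj_psi (j : ℕ) (hm : ∀ k, 2 ≤ m k) :
    Measurable fun x : G m => (starRingEnd ℂ) (psi m j x) := by
  exact continuous_star.measurable.comp (measurable_psi hm j)

include hm

lemma integrable_mul_conj_psi {f : G m → ℂ} (hf : Integrable f μ) (j : ℕ) :
    Integrable (fun x => f x * (starRingEnd ℂ) (psi m j x)) μ := by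
  have h := hf.bdd_mul (measurable_conj_psi j hm).aestronglyMeasurable
    (c := 1) (Filter.Eventually.of_forall fun x => by rw [RCLike.norm_conj, norm_psi hm])
  simpa [mul_comm] using h

lemma integrable_char (j k : ℕ) :
    Integrable (fun x => psi m j x * (starRingEnd ℂ) (psi m k x)) μ := by
  have hpsi : Integrable (psi m j) μ := by
    have h := (integrable_const (1 : ℂ) (μ := μ)).bdd_mul
      (measurable_psi hm j).aestronglyMeasurable (c := 1) (Filter.Eventually.of_forall fun x => by rw [norm_psi hm])
    simpa using h
  exact integrable_mul_conj_psi hm μ hpsi k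

lemma integral_char (j k : ℕ) :
    ∫ x, psi m j x * (starRingEnd ℂ) (psi m k x) ∂μ = if j = k then 1 else 0 := by
  by_cases hjk : j = k
  · subst hjk
    rw [if_pos rfl]
    have hval : ∀ x : G m, psi m j x * (starRingEnd ℂ) (psi m j x) = 1 := fun x => by
      rw [Complex.mul_conj]
      norm_cast
      rw [Complex.normSq_eq_norm_sq, norm_psi hm]
      norm_num
    simp only [hval]
    simp
  · rw [if_neg hjk]
    obtain ⟨i, hi⟩ := exists_digit_ne hm hjk
    set F := fun x : G m => psi m j x * (starRingEnd ℂ) (psi m k x) with hF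
    set t : G m := Pi.single i (1 : ZMod (m i)) with ht
    have hmulF : ∀ x, F (t + x) = F t * F x := by
      intro x
      simp only [hF, psi_add hm, map_mul]
      ring
    have hFt : F t ≠ 1 := by
      simp only [hF, ht]
      rw [psi_single hm, psi_single hm, chi_merge]
      exact fun hc => hi ((chi_eq_one_iff (m i) (hm i) _ _
        (digit_lt hm j i) (digit_lt hm k i)).mp hc)
    have hinv : ∫ x, F (t + x) ∂μ = ∫ x, F x ∂μ := integral_add_left_eq_self F t
    have h2 : F t * ∫ x, F x ∂μ = ∫ x, F x ∂μ := by
      calc F t * ∫ x, F x ∂μ = ∫ x, F t * F x ∂μ := (integral_const_mul _ _).symm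
        _ = ∫ x, F (t + x) ∂μ := integral_congr_ae (Filter.Eventually.of_forall fun x => (hmulF x).symm)
        _ = ∫ x, F x ∂μ := hinv
    have h0 : (F t - 1) * ∫ x, F x ∂μ = 0 := by
      rw [sub_mul, h2, one_mul, sub_self]
    exact (mul_eq_zero.mp h0).resolve_left (sub_ne_zero_of_ne hFt)

lemma integral_conj_psi (k : ℕ) :
    ∫ x, (starRingEnd ℂ) (psi m k x) ∂μ = if k = 0 then 1 else 0 := by
  have h := integral_char hm μ 0 k
  simp only [psi_zero hm, one_mul] at h
  rw [h]
  by_cases h0 : k = 0 <;> simp [h0, eq_comm]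

end IntegralLemmas

section Fejer
variable (μ : Measure (G m)) [IsProbabilityMeasure μ] [μ.IsAddHaarMeasure]

omit hm in
lemma sum_Icc_sum_range (F : ℕ → ℂ) (n : ℕ) :
    ∑ k ∈ Finset.Icc 1 n, ∑ j ∈ Finset.range k, F j
      = ∑ j ∈ Finset.range n, ((n - j : ℕ) : ℂ) * F j := by
  induction n with
  | zero => simp
  | succ n ih =>
    rw [← Finset.insert_Icc_right_eq_Icc_add_one (by omega : 1 ≤ n + 1),
      Finset.sum_insert (by simp)]
    rw [ih]
    have hsplit : ∀ j ∈ Finset.range (n + 1),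
        ((n + 1 - j : ℕ) : ℂ) * F j = F j + ((n - j : ℕ) : ℂ) * F j := by
      intro j hj
      have hj' : j ≤ n := by simpa [Nat.lt_succ_iff] using hj
      have : (n + 1 - j : ℕ) = (n - j) + 1 := by omega
      rw [this]
      push_cast
      ring
    rw [Finset.sum_congr rfl hsplit, Finset.sum_add_distrib]
    rw [Finset.sum_range_succ (f := fun j => ((n - j : ℕ) : ℂ) * F j)]
    simp

omit hm in
lemma sigma_eq (f : G m → ℂ) (n : ℕ) (x : G m) :
    sigma m μ n f x = (n : ℂ)⁻¹ *
      ∑ j ∈ Finset.range n, ((n - j : ℕ) : ℂ) * (fourierCoeff m μ f j * psi m j x) := by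
  unfold sigma S
  rw [sum_Icc_sum_range]

include hm

lemma integral_sigma_mul_conj (f : G m → ℂ) (n k : ℕ) :
    ∫ x, sigma m μ n f x * (starRingEnd ℂ) (psi m k x) ∂μ
      = if k < n then (n : ℂ)⁻¹ * ((n - k : ℕ) : ℂ) * fourierCoeff m μ f k else 0 := by
  have heq : ∀ x : G m, sigma m μ n f x * (starRingEnd ℂ) (psi m k x)
      = ∑ j ∈ Finset.range n, ((n : ℂ)⁻¹ * ((n - j : ℕ) : ℂ) * fourierCoeff m μ f j)
          * (psi m j x * (starRingEnd ℂ) (psi m k x)) := by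
    intro x
    rw [sigma_eq μ f n x, Finset.mul_sum, Finset.sum_mul]
    exact Finset.sum_congr rfl fun j _ => by ring
  rw [integral_congr_ae (Filter.Eventually.of_forall heq)]
  rw [integral_finset_sum _ (fun j _ => (integrable_char hm μ j k).const_mul _)]
  have hterm : ∀ j ∈ Finset.range n,
      ∫ x, ((n : ℂ)⁻¹ * ((n - j : ℕ) : ℂ) * fourierCoeff m μ f j)
        * (psi m j x * (starRingEnd ℂ) (psi m k x)) ∂μ
      = ((n : ℂ)⁻¹ * ((n - j : ℕ) : ℂ) * fourierCoeff m μ f j) * (if j = k then 1 else 0) := by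
    intro j _
    rw [integral_const_mul, integral_char hm μ j k]
  rw [Finset.sum_congr rfl hterm]
  simp only [mul_ite, mul_one, mul_zero]
  rw [Finset.sum_ite_eq' (Finset.range n) k]
  simp [Finset.mem_range]

lemma integral_sigma_sub_mul_conj (f : G m → ℂ) (hf : Integrable f μ) {n k : ℕ} (hk : k < n) :
    ∫ x, (sigma m μ n f x - f x) * (starRingEnd ℂ) (psi m k x) ∂μ
      = ((n : ℂ)⁻¹ * ((n - k : ℕ) : ℂ) - 1) * fourierCoeff m μ f k := by
  have hsig : Integrable (fun x => sigma m μ n f x * (starRingEnd ℂ) (psi m k x)) μ := by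
    have : (fun x => sigma m μ n f x * (starRingEnd ℂ) (psi m k x))
        = fun x => ∑ j ∈ Finset.range n, ((n : ℂ)⁻¹ * ((n - j : ℕ) : ℂ) * fourierCoeff m μ f j)
            * (psi m j x * (starRingEnd ℂ) (psi m k x)) := by
      funext x
      rw [sigma_eq μ f n x, Finset.mul_sum, Finset.sum_mul]
      exact Finset.sum_congr rfl fun j _ => by ring
    rw [this]
    exact integrable_finset_sum _ fun j _ => (integrable_char hm μ j k).const_mul _
  have hfc : Integrable (fun x => f x * (starRingEnd ℂ) (psi m k x)) μ :=
    integrable_mul_conj_psi hm μ hf k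
  have heq : ∀ x : G m, (sigma m μ n f x - f x) * (starRingEnd ℂ) (psi m k x)
      = sigma m μ n f x * (starRingEnd ℂ) (psi m k x)
        - f x * (starRingEnd ℂ) (psi m k x) := fun x => by ring
  rw [integral_congr_ae (Filter.Eventually.of_forall heq), integral_sub hsig hfc,
    integral_sigma_mul_conj hm μ f n k, if_pos hk]
  unfold fourierCoeff
  ring

end Fejer

section StepA
variable (μ : Measure (G m)) [IsProbabilityMeasure μ] [μ.IsAddHaarMeasure]

include hm

lemma norm_integral_mul_conj_le {g : G m → ℂ} (hg : Integrable g μ) (k : ℕ) :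
    ‖∫ x, g x * (starRingEnd ℂ) (psi m k x) ∂μ‖ ≤ (eLpNorm g 1 μ).toReal := by
  calc ‖∫ x, g x * (starRingEnd ℂ) (psi m k x) ∂μ‖
      ≤ ∫ x, ‖g x * (starRingEnd ℂ) (psi m k x)‖ ∂μ := norm_integral_le_integral_norm _
    _ = ∫ x, ‖g x‖ ∂μ := by
        apply integral_congr_ae
        filter_upwards with x
        rw [norm_mul, RCLike.norm_conj, norm_psi hm, mul_one]
    _ = (eLpNorm g 1 μ).toReal := by
        rw [eLpNorm_one_eq_lintegral_enorm]
        exact integral_norm_eq_lintegral_enorm hg.1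

lemma measurable_sigma (f : G m → ℂ) (n : ℕ) : Measurable (sigma m μ n f) := by
  have : sigma m μ n f = fun x => (n : ℂ)⁻¹ *
      ∑ j ∈ Finset.range n, ((n - j : ℕ) : ℂ) * (fourierCoeff m μ f j * psi m j x) :=
    funext fun x => sigma_eq μ f n x
  rw [this]
  exact (Finset.measurable_sum _ fun j _ =>
    (((measurable_psi hm j).const_mul _).const_mul _)).const_mul _

lemma memLp_sigma (f : G m → ℂ) (n : ℕ) (p : ℝ≥0∞) : MemLp (sigma m μ n f) p μ := by
  apply MemLp.of_bound (measurable_sigma hm μ f n).aestronglyMeasurable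
    (‖(n : ℂ)⁻¹‖ * ∑ j ∈ Finset.range n, ‖((n - j : ℕ) : ℂ) * fourierCoeff m μ f j‖)
  filter_upwards with x
  rw [sigma_eq μ f n x, norm_mul]
  apply mul_le_mul_of_nonneg_left _ (norm_nonneg _)
  calc ‖∑ j ∈ Finset.range n, ((n - j : ℕ) : ℂ) * (fourierCoeff m μ f j * psi m j x)‖
      ≤ ∑ j ∈ Finset.range n, ‖((n - j : ℕ) : ℂ) * (fourierCoeff m μ f j * psi m j x)‖ :=
        norm_sum_le _ _
    _ = ∑ j ∈ Finset.range n, ‖((n - j : ℕ) : ℂ) * fourierCoeff m μ f j‖ := by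
        apply Finset.sum_congr rfl
        intro j _
        rw [show ((n - j : ℕ) : ℂ) * (fourierCoeff m μ f j * psi m j x)
            = (((n - j : ℕ) : ℂ) * fourierCoeff m μ f j) * psi m j x by ring,
          norm_mul, norm_psi hm, mul_one]

lemma fourierCoeff_eq_zero_of_littleO
    (p : ℝ≥0∞) (hp : 1 ≤ p) (f : G m → ℂ) (hf : MemLp f p μ)
    (h : (fun n : ℕ => (eLpNorm (fun x => sigma m μ (M m n) f x - f x) p μ).toReal)
      =o[atTop] fun n : ℕ => ((M m n : ℝ))⁻¹)
    {k : ℕ} (hk : k ≠ 0) : fourierCoeff m μ f k = 0 := by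
  have hfi : Integrable f μ := hf.integrable hp
  set T : ℕ → ℝ := fun n => (eLpNorm (fun x => sigma m μ (M m n) f x - f x) p μ).toReal with hT
  have htendsto : Tendsto (fun n => T n * (M m n : ℝ)) atTop (nhds 0) := by
    have := h.tendsto_div_nhds_zero
    simpa [div_inv_eq_mul] using this
  have hbound : ∀ᶠ n in atTop, (k : ℝ) * ‖fourierCoeff m μ f k‖ ≤ T n * (M m n : ℝ) := by
    filter_upwards [Filter.eventually_ge_atTop (k + 1)] with n hn
    have hkM : k < M m n := lt_of_lt_of_le (lt_M_self hm k) (M_mono hm hn)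
    have hMpos : 0 < M m n := M_pos hm n
    have hMC : ((M m n : ℕ) : ℂ) ≠ 0 := by
      exact_mod_cast hMpos.ne'
    set g : G m → ℂ := fun x => sigma m μ (M m n) f x - f x with hg
    have hgmem : MemLp g p μ := (memLp_sigma hm μ f (M m n) p).sub hf
    have hgi : Integrable g μ := hgmem.integrable hp
    have hval : ∫ x, g x * (starRingEnd ℂ) (psi m k x) ∂μ
        = (((M m n : ℕ) : ℂ)⁻¹ * ((M m n - k : ℕ) : ℂ) - 1) * fourierCoeff m μ f k :=
      integral_sigma_sub_mul_conj hm μ f hfi hkM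
    have hfactor : (((M m n : ℕ) : ℂ)⁻¹ * ((M m n - k : ℕ) : ℂ) - 1) = -(k : ℂ) / (M m n : ℕ) := by
      have hcast : ((M m n - k : ℕ) : ℂ) = ((M m n : ℕ) : ℂ) - (k : ℂ) := by
        push_cast [Nat.cast_sub hkM.le]
        ring
      rw [hcast]
      field_simp
      ring
    have hnorm : ‖∫ x, g x * (starRingEnd ℂ) (psi m k x) ∂μ‖
        = (k : ℝ) / (M m n : ℝ) * ‖fourierCoeff m μ f k‖ := by
      rw [hval, hfactor, norm_mul, norm_div]
      congr 2
      · rw [norm_neg]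
        simp
      · simp
    have hle1 : ‖∫ x, g x * (starRingEnd ℂ) (psi m k x) ∂μ‖ ≤ (eLpNorm g 1 μ).toReal :=
      norm_integral_mul_conj_le hm μ hgi k
    have hle2 : (eLpNorm g 1 μ).toReal ≤ T n := by
      apply ENNReal.toReal_mono hgmem.eLpNorm_ne_top
      exact eLpNorm_le_eLpNorm_of_exponent_le hp hgmem.aestronglyMeasurable
    have hfinal : (k : ℝ) / (M m n : ℝ) * ‖fourierCoeff m μ f k‖ ≤ T n := by
      rw [← hnorm]
      exact hle1.trans hle2
    have hMr : (0 : ℝ) < (M m n : ℝ) := by exact_mod_cast hMpos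
    calc (k : ℝ) * ‖fourierCoeff m μ f k‖
        = ((k : ℝ) / (M m n : ℝ) * ‖fourierCoeff m μ f k‖) * (M m n : ℝ) := by
          field_simp
      _ ≤ T n * (M m n : ℝ) := by
          exact mul_le_mul_of_nonneg_right hfinal hMr.le
  have hle : (k : ℝ) * ‖fourierCoeff m μ f k‖ ≤ 0 :=
    ge_of_tendsto htendsto hbound
  have hk1 : (1 : ℝ) ≤ (k : ℝ) := by exact_mod_cast Nat.one_le_iff_ne_zero.mpr hk
  have : ‖fourierCoeff m μ f k‖ ≤ 0 := by nlinarith [norm_nonneg (fourierCoeff m μ f k)]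
  have := le_antisymm this (norm_nonneg _)
  simpa using this

end StepA

section StepB

include hm

lemma psi_split {n q r : ℕ} (hq : q < m n) (hr : r < M m n) (y : G m) :
    psi m (q * M m n + r) y = psi m r y * rad m n y ^ q := by
  have hlt : q * M m n + r < M m (n + 1) := by
    have h1 : q * M m n + r < (q + 1) * M m n := by
      have := M_pos hm n
      nlinarith
    have h2 : (q + 1) * M m n ≤ m n * M m n := Nat.mul_le_mul_right _ (by omega)
    calc q * M m n + r < (q + 1) * M m n := h1
      _ ≤ m n * M m n := h2
      _ = M m (n + 1) := rfl
  rw [psi_eq_prod hm hlt, Finset.prod_range_succ, psi_eq_prod hm hr]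
  congr 1
  · exact Finset.prod_congr rfl fun k hk => by
      rw [digit_add_mul hm (Finset.mem_range.mp hk)]
  · rw [digit_top hm hr, Nat.mod_eq_of_lt hq]

lemma sum_char (n : ℕ) (a x : G m) :
    ∑ j ∈ Finset.range (M m n), psi m j a * (starRingEnd ℂ) (psi m j x)
      = if (∀ k < n, x k = a k) then ((M m n : ℕ) : ℂ) else 0 := by
  induction n with
  | zero =>
    have : M m 0 = 1 := rfl
    rw [this]
    simp [psi_zero hm]
  | succ n ih =>
    haveI : NeZero (m n) := ⟨by have := hm n; omega⟩
    have hMpos := M_pos hm n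
    have hre : ∑ j ∈ Finset.range (M m (n + 1)), psi m j a * (starRingEnd ℂ) (psi m j x)
        = ∑ p ∈ Finset.range (m n) ×ˢ Finset.range (M m n),
            psi m (p.1 * M m n + p.2) a * (starRingEnd ℂ) (psi m (p.1 * M m n + p.2) x) := by
      apply Finset.sum_nbij' (fun j => (j / M m n, j % M m n))
        (fun p => p.1 * M m n + p.2)
      · intro j hj
        simp only [Finset.mem_range] at hj
        simp only [Finset.mem_product, Finset.mem_range]
        constructor
        · rw [Nat.div_lt_iff_lt_mul hMpos]
          simpa [M, Nat.mul_comm] using hj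
        · exact Nat.mod_lt _ hMpos
      · intro p hp
        simp only [Finset.mem_product, Finset.mem_range] at hp
        simp only [Finset.mem_range]
        calc p.1 * M m n + p.2 < p.1 * M m n + M m n := by omega
          _ = (p.1 + 1) * M m n := by ring
          _ ≤ m n * M m n := Nat.mul_le_mul_right _ (by omega)
          _ = M m (n + 1) := rfl
      · intro j _
        have h0 := Nat.div_add_mod j (M m n)
        have hc : j / M m n * M m n = M m n * (j / M m n) := Nat.mul_comm _ _
        simp only
        omega
      · intro p hp
        simp only [Finset.mem_product, Finset.mem_range] at hp
        have h1 : (p.1 * M m n + p.2) / M m n = p.1 := by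
          rw [Nat.add_comm, Nat.add_mul_div_right _ _ hMpos, Nat.div_eq_of_lt hp.2]
          omega
        have h2 : (p.1 * M m n + p.2) % M m n = p.2 := by
          rw [Nat.add_comm, Nat.add_mul_mod_self_right, Nat.mod_eq_of_lt hp.2]
        simp only [h1, h2]
      · intro j hj
        have h0 := Nat.div_add_mod j (M m n)
        have hc : j / M m n * M m n = M m n * (j / M m n) := Nat.mul_comm _ _
        have hval : j / M m n * M m n + j % M m n = j := by omega
        rw [hval]
    rw [hre, Finset.sum_product]
    have hterm : ∀ q ∈ Finset.range (m n), ∀ r ∈ Finset.range (M m n),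
        psi m (q * M m n + r) a * (starRingEnd ℂ) (psi m (q * M m n + r) x)
        = (psi m r a * (starRingEnd ℂ) (psi m r x))
            * ((rad m n a * (starRingEnd ℂ) (rad m n x)) ^ q) := by
      intro q hq r hr
      rw [psi_split hm (Finset.mem_range.mp hq) (Finset.mem_range.mp hr),
        psi_split hm (Finset.mem_range.mp hq) (Finset.mem_range.mp hr),
        map_mul, map_pow, mul_pow]
      ring
    have hfact : ∑ q ∈ Finset.range (m n), ∑ r ∈ Finset.range (M m n),
        psi m (q * M m n + r) a * (starRingEnd ℂ) (psi m (q * M m n + r) x)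
        = (∑ r ∈ Finset.range (M m n), psi m r a * (starRingEnd ℂ) (psi m r x))
          * (∑ q ∈ Finset.range (m n), (rad m n a * (starRingEnd ℂ) (rad m n x)) ^ q) := by
      rw [Finset.mul_sum]
      apply Finset.sum_congr rfl
      intro q hq
      rw [Finset.sum_mul]
      apply Finset.sum_congr rfl
      intro r hr
      exact hterm q hq r hr
    rw [hfact, ih]
    have hgeom : ∑ q ∈ Finset.range (m n), (rad m n a * (starRingEnd ℂ) (rad m n x)) ^ q
        = if (a n).val = (x n).val then ((m n : ℕ) : ℂ) else 0 := by
      rw [rad_eq, rad_eq]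
      exact geom_chi (m n) (hm n) (a n).val (x n).val (ZMod.val_lt _) (ZMod.val_lt _)
    rw [hgeom]
    have hcond : ((a n).val = (x n).val) ↔ (x n = a n) :=
      ⟨fun h => (ZMod.val_injective _ h).symm, fun h => by rw [h]⟩
    by_cases h1 : ∀ k < n, x k = a k
    · by_cases h2 : x n = a n
      · have hp3 : ∀ k < n + 1, x k = a k := by
          intro k hk
          rcases Nat.lt_succ_iff_lt_or_eq.mp hk with h | h
          · exact h1 k h
          · subst h; exact h2
        rw [if_pos h1, if_pos (hcond.mpr h2), if_pos hp3]
        have hM1 : M m (n + 1) = m n * M m n := rfl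
        rw [hM1]
        push_cast
        ring
      · have hp2 : ¬ ((a n).val = (x n).val) := fun hc => h2 (hcond.mp hc)
        have hp3 : ¬ (∀ k < n + 1, x k = a k) := fun hc => h2 (hc n (Nat.lt_succ_self n))
        rw [if_pos h1, if_neg hp2, if_neg hp3, mul_zero]
    · have hp3 : ¬ (∀ k < n + 1, x k = a k) :=
        fun hc => h1 (fun k hk => hc k (Nat.lt_succ_of_lt hk))
      rw [if_neg h1, if_neg hp3, zero_mul]

end StepB

section SigmaAlgebra

/-- The collection of cylinder sets. -/
def cylSet (m : ℕ → ℕ) : Set (Set (G m)) :=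
  {s | ∃ n, ∃ a : G m, s = {y : G m | ∀ k < n, y k = a k}}

omit hm in
lemma measurableSet_cyl (n : ℕ) (a : G m) :
    MeasurableSet {y : G m | ∀ k < n, y k = a k} := by
  have h : {y : G m | ∀ k < n, y k = a k}
      = ⋂ k ∈ Set.Iio n, (fun y : G m => y k) ⁻¹' {a k} := by
    ext y
    simp [Set.mem_iInter]
  rw [h]
  exact MeasurableSet.biInter (Set.to_countable _)
    fun k _ => (measurable_pi_apply k) MeasurableSpace.measurableSet_top

omit hm in
lemma isPiSystem_cylSet : IsPiSystem (cylSet m) := by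
  rintro s ⟨n, a, rfl⟩ t ⟨n', a', rfl⟩ hne
  obtain ⟨x, hx1, hx2⟩ := hne
  refine ⟨max n n', x, ?_⟩
  ext y
  simp only [Set.mem_inter_iff, Set.mem_setOf_eq]
  constructor
  · rintro ⟨hy1, hy2⟩ k hk
    rcases lt_max_iff.mp hk with h | h
    · rw [hy1 k h, ← hx1 k h]
    · rw [hy2 k h, ← hx2 k h]
  · intro hy
    constructor
    · intro k hk
      rw [hy k (lt_max_iff.mpr (Or.inl hk)), hx1 k hk]
    · intro k hk
      rw [hy k (lt_max_iff.mpr (Or.inr hk)), hx2 k hk]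

include hm

lemma coord_mem_generateFrom (k : ℕ) (b : ZMod (m k)) :
    MeasurableSet[MeasurableSpace.generateFrom (cylSet m)] {y : G m | y k = b} := by
  haveI : ∀ i : Fin (k + 1), NeZero (m i) := fun i => ⟨by have := hm i; omega⟩
  haveI : ∀ i : Fin (k + 1), Fintype (ZMod (m i)) := fun i => ZMod.fintype _
  have hext : ∀ c : (∀ i : Fin (k + 1), ZMod (m i)), True := fun _ => trivial
  set ext : (∀ i : Fin (k + 1), ZMod (m i)) → G m :=
    fun c l => if h : l < k + 1 then c ⟨l, h⟩ else 0 with hextdef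
  have hunion : {y : G m | y k = b}
      = ⋃ (c : ∀ i : Fin (k + 1), ZMod (m i)) (_ : c ⟨k, Nat.lt_succ_self k⟩ = b),
          {y : G m | ∀ l < k + 1, y l = ext c l} := by
    ext y
    simp only [Set.mem_setOf_eq, Set.mem_iUnion]
    constructor
    · intro hy
      refine ⟨fun i => y i, by simpa using hy, ?_⟩
      intro l hl
      simp only [hextdef]
      rw [dif_pos hl]
    · rintro ⟨c, hc, hy⟩
      have := hy k (Nat.lt_succ_self k)
      simp only [hextdef] at this
      rw [dif_pos (Nat.lt_succ_self k)] at this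
      rw [this, hc]
  rw [hunion]
  exact MeasurableSet.iUnion fun c => MeasurableSet.iUnion fun _ =>
    MeasurableSpace.measurableSet_generateFrom ⟨k + 1, ext c, rfl⟩

lemma measurableSpace_eq :
    (inferInstance : MeasurableSpace (G m)) = MeasurableSpace.generateFrom (cylSet m) := by
  apply le_antisymm
  · rw [show (inferInstance : MeasurableSpace (G m)) = MeasurableSpace.pi from rfl,
      MeasurableSpace.pi]
    apply iSup_le
    intro k
    rintro s ⟨t, -, rfl⟩
    haveI : NeZero (m k) := ⟨by have := hm k; omega⟩
    haveI : Fintype (ZMod (m k)) := ZMod.fintype _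
    have hu : (fun y : G m => y k) ⁻¹' t = ⋃ (b : t), {y : G m | y k = (b : ZMod (m k))} := by
      ext y
      simp [Set.mem_iUnion]
    rw [hu]
    haveI : Countable t := Set.to_countable t
    exact MeasurableSet.iUnion fun b => coord_mem_generateFrom hm k b
  · apply MeasurableSpace.generateFrom_le
    rintro s ⟨n, a, rfl⟩
    exact measurableSet_cyl n a

end SigmaAlgebra

section Conclusion
variable (μ : Measure (G m)) [IsProbabilityMeasure μ] [μ.IsAddHaarMeasure]

include hm

lemma setIntegral_cyl_eq_zero {g : G m → ℂ} (hgi : Integrable g μ)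
    (h0 : ∀ j, ∫ x, g x * (starRingEnd ℂ) (psi m j x) ∂μ = 0) (n : ℕ) (a : G m) :
    ∫ x in {y : G m | ∀ k < n, y k = a k}, g x ∂μ = 0 := by
  have hmeas := measurableSet_cyl (m := m) n a
  rw [← integral_indicator hmeas]
  have hind : ∀ x : G m, Set.indicator {y : G m | ∀ k < n, y k = a k} g x
      = ((M m n : ℕ) : ℂ)⁻¹ * ∑ j ∈ Finset.range (M m n),
          psi m j a * (g x * (starRingEnd ℂ) (psi m j x)) := by
    intro x
    have hsum : ∑ j ∈ Finset.range (M m n), psi m j a * (g x * (starRingEnd ℂ) (psi m j x))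
        = g x * ∑ j ∈ Finset.range (M m n), psi m j a * (starRingEnd ℂ) (psi m j x) := by
      rw [Finset.mul_sum]
      exact Finset.sum_congr rfl fun j _ => by ring
    rw [hsum, sum_char hm n a x]
    have hMne : ((M m n : ℕ) : ℂ) ≠ 0 := by
      exact_mod_cast (M_pos hm n).ne'
    by_cases hx : ∀ k < n, x k = a k
    · rw [if_pos hx,
        Set.indicator_of_mem (show x ∈ {y : G m | ∀ k < n, y k = a k} from hx) g]
      field_simp
    · rw [if_neg hx,
        Set.indicator_of_notMem (show x ∉ {y : G m | ∀ k < n, y k = a k} from hx) g]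
      simp
  rw [integral_congr_ae (Filter.Eventually.of_forall hind), integral_const_mul,
    integral_finset_sum _ (fun j _ => ((integrable_mul_conj_psi hm μ hgi j).const_mul _))]
  have : ∀ j ∈ Finset.range (M m n),
      ∫ x, psi m j a * (g x * (starRingEnd ℂ) (psi m j x)) ∂μ = 0 := by
    intro j _
    rw [integral_const_mul, h0 j, mul_zero]
  rw [Finset.sum_congr rfl this]
  simp

lemma ae_zero_of_coeffs_zero {g : G m → ℂ} (hgi : Integrable g μ)
    (h0 : ∀ j, ∫ x, g x * (starRingEnd ℂ) (psi m j x) ∂μ = 0) :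
    g =ᵐ[μ] 0 := by
  have htotal : ∫ x, g x ∂μ = 0 := by
    have := h0 0
    simpa [psi_zero hm] using this
  have hall : ∀ ⦃s : Set (G m)⦄, MeasurableSet s → ∫ x in s, g x ∂μ = 0 := by
    refine MeasurableSpace.induction_on_inter (C := fun t _ => ∫ x in t, g x ∂μ = 0)
      (measurableSpace_eq hm) isPiSystem_cylSet ?_ ?_ ?_ ?_
    · simp
    · rintro t ⟨n, a, rfl⟩
      exact setIntegral_cyl_eq_zero hm μ hgi h0 n a
    · intro t ht hC
      have := integral_add_compl ht hgi
      rw [hC, htotal] at this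
      linear_combination this
    · intro f hd hmeas hC
      rw [integral_iUnion hmeas hd hgi.integrableOn]
      simp [hC]
  exact hgi.ae_eq_zero_of_forall_setIntegral_eq_zero fun s hs _ => hall hs

end Conclusion

end Aux

/-- if `‖σ_(M_n) f - f‖_p = o(1/M_n)` then `f` is a.e. constant. -/
theorem constant_of_fejer_littleO
    (m : ℕ → ℕ) (hm : ∀ k, 2 ≤ m k)
    (R : ℝ) (hR : IsLUB (Set.range fun k => (m k : ℝ)) R)
    (μ : Measure (G m)) [IsProbabilityMeasure μ] [μ.IsAddHaarMeasure]
    (p : ℝ≥0∞) (hp : 1 ≤ p) (hp' : p ≠ ∞)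
    (f : G m → ℂ) (hf : MemLp f p μ)
    (h : (fun n : ℕ => (eLpNorm (fun x => sigma m μ (M m n) f x - f x) p μ).toReal)
      =o[atTop] fun n : ℕ => ((M m n : ℝ))⁻¹) :
    ∃ c : ℂ, f =ᵐ[μ] fun _ => c := by
  have hfi : Integrable f μ := hf.integrable hp
  refine ⟨fourierCoeff m μ f 0, ?_⟩
  set c := fourierCoeff m μ f 0 with hc
  have hgi : Integrable (fun x => f x - c) μ := hfi.sub (integrable_const c)
  have h0 : ∀ j, ∫ x, (f x - c) * (starRingEnd ℂ) (psi m j x) ∂μ = 0 := by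
    intro j
    have hsplit : ∀ x : G m, (f x - c) * (starRingEnd ℂ) (psi m j x)
        = f x * (starRingEnd ℂ) (psi m j x) - c * (starRingEnd ℂ) (psi m j x) := fun x => by
      ring
    rw [integral_congr_ae (Filter.Eventually.of_forall hsplit),
      integral_sub (integrable_mul_conj_psi hm μ hfi j)
        (integrable_mul_conj_psi hm μ (integrable_const c) j),
      integral_const_mul, integral_conj_psi hm μ j]
    by_cases hj : j = 0
    · subst hj
      rw [if_pos rfl, mul_one]
      have hint : ∫ x, f x * (starRingEnd ℂ) (psi m 0 x) ∂μ = c := rfl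
      rw [hint, sub_self]
    · rw [if_neg hj, mul_zero]
      have hcj : fourierCoeff m μ f j = 0 :=
        fourierCoeff_eq_zero_of_littleO hm μ p hp f hf h hj
      have hint : ∫ x, f x * (starRingEnd ℂ) (psi m j x) ∂μ = fourierCoeff m μ f j := rfl
      rw [hint, hcj, sub_zero]
  have hg := ae_zero_of_coeffs_zero hm μ hgi h0
  filter_upwards [hg] with x hx
  have hx' : f x - c = 0 := hx
  exact sub_eq_zero.mp hx'


end VilenkinPaper
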